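/- Let Ω be a finite abelian group of order d endowed with a nondegenerate symmetric bicharacter ⟨·,·⟩, and let {φ_x : x∈Ω}, {ψ_y : y∈Ω} be two Fourier conjugate mutually unbiased bases of a d-dimensional complex Hilbert space H. Then the set of eigenvalues of the Haagerup matrix Λ equals {Re ⟨r,s⟩ : r, s ∈ Ω}. -/

import Mathlib

open scoped InnerProductSpace

noncomputable section

namespace HaagerupAux
set_option linter.unusedSectionVars false

structure Bichar (Ω : Type*) [Fintype Ω] [AddCommGroup Ω] where
  β : Ω → Ω → ℂ
  hnorm : ∀ x y, ‖β x y‖ = 1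
  hsymm : ∀ x y, β x y = β y x
  hadd : ∀ x₁ x₂ y, β (x₁ + x₂) y = β x₁ y * β x₂ y
  hnondeg : ∀ x, (∀ y, β x y = 1) → x = 0

namespace Bichar
variable {Ω : Type*} [Fintype Ω] [DecidableEq Ω] [AddCommGroup Ω] (B : Bichar Ω)

lemma ne_zero (x y : Ω) : B.β x y ≠ 0 := by
  intro h
  have := B.hnorm x y
  rw [h] at this; simp at this

lemma zero_left (y : Ω) : B.β 0 y = 1 := by
  have h := B.hadd 0 0 y
  rw [zero_add] at h
  exact mul_left_cancel₀ (B.ne_zero 0 y) (h.symm.trans (mul_one _).symm)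

lemma add_right (x y₁ y₂ : Ω) : B.β x (y₁ + y₂) = B.β x y₁ * B.β x y₂ := by
  rw [B.hsymm, B.hadd, B.hsymm y₁, B.hsymm y₂]

lemma zero_right (x : Ω) : B.β x 0 = 1 := by rw [B.hsymm, B.zero_left]

lemma neg_left (x y : Ω) : B.β (-x) y = (B.β x y)⁻¹ := by
  apply eq_inv_of_mul_eq_one_left
  rw [← B.hadd, neg_add_cancel, B.zero_left]

lemma neg_right (x y : Ω) : B.β x (-y) = (B.β x y)⁻¹ := by
  rw [B.hsymm, B.neg_left, B.hsymm]

lemma conj_eq (x y : Ω) : (starRingEnd ℂ) (B.β x y) = (B.β x y)⁻¹ := by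
  apply eq_inv_of_mul_eq_one_left
  rw [mul_comm, Complex.mul_conj, Complex.normSq_eq_norm_sq, B.hnorm]
  norm_num

lemma neg_neg' (x y : Ω) : B.β (-x) (-y) = B.β x y := by
  rw [B.neg_left, B.neg_right, inv_inv]

lemma sum_left (w : Ω) : ∑ u, B.β u w = if w = 0 then (Fintype.card Ω : ℂ) else 0 := by
  split_ifs with h
  · subst h; simp [B.zero_right]
  · obtain ⟨u₀, hu₀⟩ : ∃ u₀, B.β u₀ w ≠ 1 := by
      by_contra hc
      push_neg at hc
      exact h (B.hnondeg w (fun y => by rw [B.hsymm]; exact hc y))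
    have hs : B.β u₀ w * ∑ u, B.β u w = ∑ u, B.β u w := by
      rw [Finset.mul_sum]
      calc ∑ u, B.β u₀ w * B.β u w = ∑ u, B.β (u₀ + u) w := by
            simp [B.hadd]
        _ = ∑ u, B.β u w := Fintype.sum_equiv (Equiv.addLeft u₀) _ _ (fun u => rfl)
    have := sub_eq_zero.mpr hs
    rw [← sub_one_mul] at this
    rcases mul_eq_zero.mp this with h1 | h2
    · exact absurd (by linear_combination h1 : B.β u₀ w = 1) hu₀
    · exact h2

lemma sum_right (u : Ω) : ∑ w, B.β u w = if u = 0 then (Fintype.card Ω : ℂ) else 0 := by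
  simp_rw [B.hsymm u]
  exact B.sum_left u

end Bichar
end HaagerupAux

namespace HaagerupAux.Bichar
variable {Ω : Type*} [Fintype Ω] [DecidableEq Ω] [AddCommGroup Ω] (B : Bichar Ω)

lemma key0 (r s : Ω) :
    ∑ u, ∑ w, ((B.β u w).re : ℂ) * (B.β u r * B.β w s)
      = (Fintype.card Ω : ℂ) * ((B.β r s).re : ℂ) := by
  have hre : ∀ z : ℂ, ((z.re : ℝ) : ℂ) = (z + (starRingEnd ℂ) z) / 2 := by
    intro z; rw [Complex.add_conj]; push_cast; ring
  have T1 : ∑ u, ∑ w, B.β u w * (B.β u r * B.β w s)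
      = (Fintype.card Ω : ℂ) * B.β (-r) s := by
    rw [Finset.sum_comm]
    have h1 : ∀ w : Ω, ∑ u, B.β u w * (B.β u r * B.β w s)
        = (∑ u, B.β u (w + r)) * B.β w s := by
      intro w
      rw [Finset.sum_mul]
      exact Finset.sum_congr rfl (fun u _ => by rw [B.add_right]; ring)
    rw [Finset.sum_congr rfl (fun w _ => h1 w)]
    simp_rw [B.sum_left, ite_mul, zero_mul, add_eq_zero_iff_eq_neg]
    simp [Finset.sum_ite_eq']
  have T2 : ∑ u, ∑ w, (B.β u w)⁻¹ * (B.β u r * B.β w s)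
      = (Fintype.card Ω : ℂ) * B.β r s := by
    rw [Finset.sum_comm]
    have h1 : ∀ w : Ω, ∑ u, (B.β u w)⁻¹ * (B.β u r * B.β w s)
        = (∑ u, B.β u (-w + r)) * B.β w s := by
      intro w
      rw [Finset.sum_mul]
      exact Finset.sum_congr rfl (fun u _ => by rw [B.add_right, B.neg_right]; ring)
    rw [Finset.sum_congr rfl (fun w _ => h1 w)]
    simp_rw [B.sum_left, ite_mul, zero_mul, neg_add_eq_zero]
    simp [Finset.sum_ite_eq']
  calc ∑ u, ∑ w, ((B.β u w).re : ℂ) * (B.β u r * B.β w s)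
      = ∑ u, ∑ w, (B.β u w * (B.β u r * B.β w s)
          + (B.β u w)⁻¹ * (B.β u r * B.β w s)) / 2 := by
        refine Finset.sum_congr rfl (fun u _ => Finset.sum_congr rfl (fun w _ => ?_))
        rw [hre, ← B.conj_eq]; ring
    _ = ((∑ u, ∑ w, B.β u w * (B.β u r * B.β w s))
          + ∑ u, ∑ w, (B.β u w)⁻¹ * (B.β u r * B.β w s)) / 2 := by
        simp only [add_div, Finset.sum_add_distrib, ← Finset.sum_div]
    _ = (Fintype.card Ω : ℂ) * ((B.β r s).re : ℂ) := by
        rw [T1, T2, hre (B.β r s), B.neg_left, B.conj_eq]; ring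

lemma key (t p : Ω × Ω) :
    ∑ q : Ω × Ω, ((B.β (q.1 - p.1) (q.2 - p.2)).re : ℂ) * (B.β q.1 t.1 * B.β q.2 t.2)
      = (Fintype.card Ω : ℂ) * ((B.β t.1 t.2).re : ℂ) * (B.β p.1 t.1 * B.β p.2 t.2) := by
  have reidx :
      ∑ q : Ω × Ω, ((B.β (q.1 - p.1) (q.2 - p.2)).re : ℂ) * (B.β q.1 t.1 * B.β q.2 t.2)
      = ∑ u : Ω × Ω, ((B.β u.1 u.2).re : ℂ) * (B.β (p.1 + u.1) t.1 * B.β (p.2 + u.2) t.2) :=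
    (Fintype.sum_equiv (Equiv.addLeft p) _ _ (fun u => by
      simp [Prod.fst_add, Prod.snd_add, add_sub_cancel_left])).symm
  rw [reidx]
  rw [Fintype.sum_prod_type]
  calc ∑ u, ∑ v, ((B.β u v).re : ℂ) * (B.β (p.1 + u) t.1 * B.β (p.2 + v) t.2)
      = (B.β p.1 t.1 * B.β p.2 t.2) * ∑ u, ∑ v, ((B.β u v).re : ℂ) * (B.β u t.1 * B.β v t.2) := by
        rw [Finset.mul_sum]
        refine Finset.sum_congr rfl (fun u _ => ?_)
        rw [Finset.mul_sum]
        refine Finset.sum_congr rfl (fun v _ => ?_)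
        rw [B.hadd, B.hadd]; ring
    _ = _ := by rw [B.key0]; ring

lemma complete (p q : Ω × Ω) :
    ∑ t : Ω × Ω, (B.β p.1 t.1 * B.β p.2 t.2) * (starRingEnd ℂ) (B.β q.1 t.1 * B.β q.2 t.2)
      = if q = p then (Fintype.card Ω : ℂ) ^ 2 else 0 := by
  have hterm : ∀ r s : Ω, (B.β p.1 r * B.β p.2 s) * (starRingEnd ℂ) (B.β q.1 r * B.β q.2 s)
      = B.β (p.1 - q.1) r * B.β (p.2 - q.2) s := by
    intro r s
    rw [map_mul, B.conj_eq, B.conj_eq, ← B.neg_left, ← B.neg_left,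
        sub_eq_add_neg, sub_eq_add_neg, B.hadd, B.hadd]
    ring
  rw [Fintype.sum_prod_type]
  simp_rw [hterm]
  rw [← Finset.sum_mul_sum, B.sum_right, B.sum_right]
  rcases eq_or_ne q p with h | h
  · subst h; simp [sq]
  · have h1 : p.1 - q.1 ≠ 0 ∨ p.2 - q.2 ≠ 0 := by
      by_contra hc; push_neg at hc
      exact h (Prod.ext (sub_eq_zero.mp hc.1) (sub_eq_zero.mp hc.2)).symm
    rcases h1 with h1 | h1 <;> simp [h1, if_neg h]

end HaagerupAux.Bichar


open HaagerupAux
open scoped InnerProductSpace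

/-- The Haagerup matrix of a pair of bases, with entries
`Λ_{(x,y),(z,t)} = d·Re[⟨ψ_y, φ_z⟩⟨φ_z, ψ_t⟩⟨ψ_t, φ_x⟩⟨φ_x, ψ_y⟩]`. -/
def haagerup {Ω H : Type*} [NormedAddCommGroup H] [InnerProductSpace ℂ H]
    (d : ℕ) (φ ψ : Ω → H) : Matrix (Ω × Ω) (Ω × Ω) ℝ := fun p q =>
  (d : ℝ) * (⟪ψ p.2, φ q.1⟫_ℂ * ⟪φ q.1, ψ q.2⟫_ℂ * ⟪ψ q.2, φ p.1⟫_ℂ * ⟪φ p.1, ψ p.2⟫_ℂ).re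

theorem haagerup_eigenvalues_of_Fourier_MUB
    {H : Type*} [NormedAddCommGroup H] [InnerProductSpace ℂ H] [FiniteDimensional ℂ H]
    {Ω : Type*} [Fintype Ω] [DecidableEq Ω] [AddCommGroup Ω]
    (d : ℕ) (hcard : Fintype.card Ω = d) (hdim : Module.finrank ℂ H = d)
    (β : Ω → Ω → ℂ)
    (hβnorm : ∀ x y, ‖β x y‖ = 1)
    (hβsymm : ∀ x y, β x y = β y x)
    (hβadd : ∀ x₁ x₂ y, β (x₁ + x₂) y = β x₁ y * β x₂ y)
    (hβnondeg : ∀ x, (∀ y, β x y = 1) → x = 0)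
    (φ ψ : OrthonormalBasis Ω ℂ H)
    (hFourier : ∀ x y : Ω, ⟪φ x, ψ y⟫_ℂ = (1 / Real.sqrt d : ℝ) * β x y) :
    {μ : ℝ | Module.End.HasEigenvalue
        (Matrix.toLin' (haagerup d (fun x => φ x) (fun y => ψ y))) μ}
      = {μ : ℝ | ∃ r s : Ω, μ = (β r s).re} := by
  subst hcard
  clear hdim
  let B : Bichar Ω := ⟨β, hβnorm, hβsymm, hβadd, hβnondeg⟩
  have hβeq : β = B.β := rfl
  rw [hβeq] at hFourier
  rw [hβeq]
  clear_value B
  clear hβeq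
  have : Nonempty Ω := ⟨0⟩
  have hD0 : (Fintype.card Ω : ℝ) ≠ 0 := Nat.cast_ne_zero.mpr Fintype.card_ne_zero
  have hDC0 : (Fintype.card Ω : ℂ) ≠ 0 := Nat.cast_ne_zero.mpr Fintype.card_ne_zero
  set M := haagerup (Fintype.card Ω) (fun x => φ x) (fun y => ψ y) with hM
  -- entry formula
  have hconj : ∀ x y : Ω, ⟪ψ y, φ x⟫_ℂ
      = ((1 / Real.sqrt (Fintype.card Ω) : ℝ) : ℂ) * (B.β x y)⁻¹ := by
    intro x y
    rw [← inner_conj_symm, hFourier, map_mul, Complex.conj_ofReal, B.conj_eq]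
  have hentry : ∀ p q : Ω × Ω,
      M p q = (Fintype.card Ω : ℝ)⁻¹ * (B.β (q.1 - p.1) (q.2 - p.2)).re := by
    intro p q
    show (Fintype.card Ω : ℝ) * (⟪ψ p.2, φ q.1⟫_ℂ * ⟪φ q.1, ψ q.2⟫_ℂ
        * ⟪ψ q.2, φ p.1⟫_ℂ * ⟪φ p.1, ψ p.2⟫_ℂ).re = _
    rw [hconj, hconj, hFourier, hFourier]
    have hcombo : B.β (q.1 - p.1) (q.2 - p.2)
        = (B.β q.1 p.2)⁻¹ * B.β q.1 q.2 * (B.β p.1 q.2)⁻¹ * B.β p.1 p.2 := by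
      rw [sub_eq_add_neg, sub_eq_add_neg, B.hadd, B.add_right, B.add_right]
      simp only [B.neg_neg', B.neg_left, B.neg_right, inv_inv]
      ring
    have hgrp : (((1 / Real.sqrt (Fintype.card Ω) : ℝ) : ℂ) * (B.β q.1 p.2)⁻¹)
          * (((1 / Real.sqrt (Fintype.card Ω) : ℝ) : ℂ) * B.β q.1 q.2)
          * (((1 / Real.sqrt (Fintype.card Ω) : ℝ) : ℂ) * (B.β p.1 q.2)⁻¹)
          * (((1 / Real.sqrt (Fintype.card Ω) : ℝ) : ℂ) * B.β p.1 p.2)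
        = (((1 / Real.sqrt (Fintype.card Ω))^4 : ℝ) : ℂ)
          * B.β (q.1 - p.1) (q.2 - p.2) := by
      rw [hcombo]; push_cast; ring
    rw [hgrp, Complex.re_ofReal_mul]
    have hs : Real.sqrt (Fintype.card Ω) ^ 2 = (Fintype.card Ω : ℝ) :=
      Real.sq_sqrt (by positivity)
    have h4 : (1 / Real.sqrt (Fintype.card Ω)) ^ 4 = ((Fintype.card Ω : ℝ) ^ 2)⁻¹ := by
      rw [div_pow, one_pow, show (Real.sqrt (Fintype.card Ω)) ^ 4
        = ((Real.sqrt (Fintype.card Ω)) ^ 2) ^ 2 by ring, hs, one_div]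
    rw [h4]
    field_simp
  -- the key complex eigen identity
  have hkeyC : ∀ (t p : Ω × Ω),
      ∑ q : Ω × Ω, ((M p q : ℝ) : ℂ) * (B.β q.1 t.1 * B.β q.2 t.2)
        = ((B.β t.1 t.2).re : ℂ) * (B.β p.1 t.1 * B.β p.2 t.2) := by
    intro t p
    have : ∀ q : Ω × Ω, ((M p q : ℝ) : ℂ) * (B.β q.1 t.1 * B.β q.2 t.2)
        = (Fintype.card Ω : ℂ)⁻¹ * (((B.β (q.1 - p.1) (q.2 - p.2)).re : ℂ)
            * (B.β q.1 t.1 * B.β q.2 t.2)) := by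
      intro q; rw [hentry]; push_cast; ring
    rw [Finset.sum_congr rfl (fun q _ => this q), ← Finset.mul_sum, B.key t p]
    field_simp
  have hMsymm : ∀ p q : Ω × Ω, M p q = M q p := by
    intro p q
    rw [hentry, hentry,
      show B.β (q.1 - p.1) (q.2 - p.2) = B.β (p.1 - q.1) (p.2 - q.2) by
        rw [← B.neg_neg' (p.1 - q.1) (p.2 - q.2), neg_sub, neg_sub]]
  ext μ
  simp only [Set.mem_setOf_eq]
  constructor
  · -- eigenvalue → is some Re β r s
    intro hμ
    obtain ⟨w, hw⟩ := hμ.exists_hasEigenvector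
    have hwne := hw.2
    have heig : ∀ p, ∑ q, M p q * w q = μ * w p := by
      have h1 := Module.End.mem_eigenspace_iff.mp hw.1
      rw [Matrix.toLin'_apply] at h1
      intro p
      have h2 := congrFun h1 p
      simpa [Matrix.mulVec, dotProduct] using h2
    have heigC : ∀ p, ∑ q : Ω × Ω, ((M p q : ℝ) : ℂ) * ((w q : ℝ) : ℂ)
        = ((μ : ℝ) : ℂ) * ((w p : ℝ) : ℂ) := by
      intro p
      have h := congrArg (fun x : ℝ => (x : ℂ)) (heig p)
      push_cast at h
      exact h
    set c : Ω × Ω → ℂ := fun t =>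
      ∑ q : Ω × Ω, (starRingEnd ℂ) (B.β q.1 t.1 * B.β q.2 t.2) * ((w q : ℝ) : ℂ) with hc
    have hconjV : ∀ (t q : Ω × Ω), (starRingEnd ℂ) (B.β q.1 t.1 * B.β q.2 t.2)
        = B.β q.1 (-t.1) * B.β q.2 (-t.2) := by
      intro t q
      rw [map_mul, B.conj_eq, B.conj_eq, B.neg_right, B.neg_right]
    have hmain : ∀ t : Ω × Ω, ((μ : ℝ) : ℂ) * c t = ((B.β t.1 t.2).re : ℂ) * c t := by
      intro t
      have inner_eval : ∀ p : Ω × Ω,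
          ∑ q : Ω × Ω, ((M q p : ℝ) : ℂ) * (starRingEnd ℂ) (B.β q.1 t.1 * B.β q.2 t.2)
            = ((B.β t.1 t.2).re : ℂ) * (starRingEnd ℂ) (B.β p.1 t.1 * B.β p.2 t.2) := by
        intro p
        calc ∑ q : Ω × Ω, ((M q p : ℝ) : ℂ) * (starRingEnd ℂ) (B.β q.1 t.1 * B.β q.2 t.2)
            = ∑ q : Ω × Ω, ((M p q : ℝ) : ℂ) * (B.β q.1 (-t.1) * B.β q.2 (-t.2)) := by
              refine Finset.sum_congr rfl (fun q _ => ?_)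
              rw [hMsymm p q, hconjV]
          _ = ((B.β (-t.1) (-t.2)).re : ℂ) * (B.β p.1 (-t.1) * B.β p.2 (-t.2)) :=
              hkeyC (-t.1, -t.2) p
          _ = ((B.β t.1 t.2).re : ℂ) * (starRingEnd ℂ) (B.β p.1 t.1 * B.β p.2 t.2) := by
              rw [B.neg_neg', hconjV t p]
      calc ((μ : ℝ) : ℂ) * c t
          = ∑ q : Ω × Ω, (starRingEnd ℂ) (B.β q.1 t.1 * B.β q.2 t.2)
              * (((μ : ℝ) : ℂ) * ((w q : ℝ) : ℂ)) := by
            rw [hc, Finset.mul_sum]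
            exact Finset.sum_congr rfl (fun q _ => by ring)
        _ = ∑ q : Ω × Ω, (starRingEnd ℂ) (B.β q.1 t.1 * B.β q.2 t.2)
              * ∑ p : Ω × Ω, ((M q p : ℝ) : ℂ) * ((w p : ℝ) : ℂ) := by
            exact Finset.sum_congr rfl (fun q _ => by rw [heigC q])
        _ = ∑ q : Ω × Ω, ∑ p : Ω × Ω, ((w p : ℝ) : ℂ)
              * (((M q p : ℝ) : ℂ) * (starRingEnd ℂ) (B.β q.1 t.1 * B.β q.2 t.2)) := by
            refine Finset.sum_congr rfl (fun q _ => ?_)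
            rw [Finset.mul_sum]
            exact Finset.sum_congr rfl (fun p _ => by ring)
        _ = ∑ p : Ω × Ω, ∑ q : Ω × Ω, ((w p : ℝ) : ℂ)
              * (((M q p : ℝ) : ℂ) * (starRingEnd ℂ) (B.β q.1 t.1 * B.β q.2 t.2)) :=
            Finset.sum_comm
        _ = ∑ p : Ω × Ω, ((w p : ℝ) : ℂ)
              * (((B.β t.1 t.2).re : ℂ) * (starRingEnd ℂ) (B.β p.1 t.1 * B.β p.2 t.2)) := by
            refine Finset.sum_congr rfl (fun p _ => ?_)
            rw [← Finset.mul_sum, inner_eval p]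
        _ = ((B.β t.1 t.2).re : ℂ) * c t := by
            rw [hc, Finset.mul_sum]
            exact Finset.sum_congr rfl (fun p _ => by ring)
    have hex : ∃ t : Ω × Ω, c t ≠ 0 := by
      by_contra hall
      push_neg at hall
      apply hwne
      funext p
      have hsum : ∑ t : Ω × Ω, (B.β p.1 t.1 * B.β p.2 t.2) * c t
          = ((Fintype.card Ω : ℂ)) ^ 2 * ((w p : ℝ) : ℂ) := by
        calc ∑ t : Ω × Ω, (B.β p.1 t.1 * B.β p.2 t.2) * c t
            = ∑ t : Ω × Ω, ∑ q : Ω × Ω, ((w q : ℝ) : ℂ)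
                * ((B.β p.1 t.1 * B.β p.2 t.2)
                  * (starRingEnd ℂ) (B.β q.1 t.1 * B.β q.2 t.2)) := by
              refine Finset.sum_congr rfl (fun t _ => ?_)
              rw [hc, Finset.mul_sum]
              exact Finset.sum_congr rfl (fun q _ => by ring)
          _ = ∑ q : Ω × Ω, ∑ t : Ω × Ω, ((w q : ℝ) : ℂ)
                * ((B.β p.1 t.1 * B.β p.2 t.2)
                  * (starRingEnd ℂ) (B.β q.1 t.1 * B.β q.2 t.2)) := Finset.sum_comm
          _ = ∑ q : Ω × Ω, ((w q : ℝ) : ℂ) * (if q = p then (Fintype.card Ω : ℂ) ^ 2 else 0) := by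
              refine Finset.sum_congr rfl (fun q _ => ?_)
              rw [← Finset.mul_sum, B.complete p q]
          _ = ((Fintype.card Ω : ℂ)) ^ 2 * ((w p : ℝ) : ℂ) := by
              simp_rw [mul_ite, mul_zero]
              rw [Finset.sum_ite_eq' Finset.univ p]
              simp [mul_comm]
      rw [Finset.sum_congr rfl (fun t _ => by rw [hall t, mul_zero])] at hsum
      rw [Finset.sum_const_zero] at hsum
      have : ((w p : ℝ) : ℂ) = 0 := by
        field_simp at hsum
        have h2 := hsum.symm
        rw [mul_eq_zero] at h2
        exact_mod_cast h2.resolve_left (by exact_mod_cast pow_ne_zero 2 Fintype.card_ne_zero)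
      exact_mod_cast this
    obtain ⟨t, hct⟩ := hex
    have h := mul_right_cancel₀ hct (hmain t)
    exact ⟨t.1, t.2, by exact_mod_cast h⟩
  · -- Re β r s is an eigenvalue
    rintro ⟨r, s, rfl⟩
    set w : Ω × Ω → ℝ := fun p => (B.β p.1 r * B.β p.2 s).re with hwdef
    have hwne : w ≠ 0 := by
      intro h
      have := congrFun h (0, 0)
      simp [hwdef, B.zero_left] at this
    have heig : Matrix.toLin' M w = (B.β r s).re • w := by
      rw [Matrix.toLin'_apply]
      funext p
      have hC := congrArg Complex.re (hkeyC (r, s) p)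
      rw [Complex.re_sum] at hC
      simp only [Complex.re_ofReal_mul] at hC
      simpa [hwdef, Matrix.mulVec, dotProduct] using hC
    exact Module.End.hasEigenvalue_of_hasEigenvector
      ⟨Module.End.mem_eigenspace_iff.mpr heig, hwne⟩
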